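/- arXiv:2101.07901 — 4 statements merged into one kernel-verified Lean document; each statement's English description precedes it below -/
import Mathlib

section
/- Every NCI graph is connected. -/
/-- A graph is a "complete intersection" (CI) iff it is a disjoint union of
edges and singletons, i.e. every vertex has at most one neighbor. -/
def SimpleGraph.IsCIGraph {V : Type*} (G : SimpleGraph V) : Prop :=
  ∀ v : V, (G.neighborSet v).Subsingleton

/-- The inversion of `G` at a vertex `v`: the graph on `V \ {v}` whose edges are
those of the induced subgraph of `G` on `V \ ({v} ∪ N(v))`. -/
def SimpleGraph.inversion {V : Type*} (G : SimpleGraph V) (v : V) :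
    SimpleGraph {u : V // u ≠ v} where
  Adj a b := G.Adj a.1 b.1 ∧ ¬ G.Adj v a.1 ∧ ¬ G.Adj v b.1
  symm := ⟨fun a b h => ⟨h.1.symm, h.2.2, h.2.1⟩⟩
  loopless := ⟨fun a h => G.loopless.irrefl a.1 h.1⟩

/-- A graph is a nearly complete intersection (NCI) iff it is not a CI and
all of its inversions are CIs. -/
def SimpleGraph.IsNCI {V : Type*} (G : SimpleGraph V) : Prop :=
  ¬ G.IsCIGraph ∧ ∀ v : V, (G.inversion v).IsCIGraph

/-- Every NCI graph is connected. -/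
theorem nci_connected {V : Type*} (G : SimpleGraph V) (h : G.IsNCI) :
    G.Connected := by
  obtain ⟨hnci, hinv⟩ := h
  rw [SimpleGraph.IsCIGraph] at hnci
  push_neg at hnci
  obtain ⟨w, hw⟩ := hnci
  obtain ⟨a, ha, b, hb, hab⟩ := hw
  have ha : G.Adj w a := ha
  have hb : G.Adj w b := hb
  have key : ∀ x, G.Reachable w x := by
    intro x
    by_contra hx
    have hxw : w ≠ x := fun h => hx (h ▸ SimpleGraph.Reachable.refl _)
    have hxa : a ≠ x := fun h => hx (h ▸ ha.reachable)
    have hxb : b ≠ x := fun h => hx (h ▸ hb.reachable)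
    have nxw : ¬ G.Adj x w := fun h => hx h.symm.reachable
    have nxa : ¬ G.Adj x a := fun h => hx (ha.reachable.trans h.symm.reachable)
    have nxb : ¬ G.Adj x b := fun h => hx (hb.reachable.trans h.symm.reachable)
    have h1 : (G.inversion x).Adj ⟨w, hxw⟩ ⟨a, hxa⟩ := ⟨ha, nxw, nxa⟩
    have h2 : (G.inversion x).Adj ⟨w, hxw⟩ ⟨b, hxb⟩ := ⟨hb, nxw, nxb⟩
    have := hinv x ⟨w, hxw⟩ h1 h2
    exact hab (by simpa using this)
  exact { preconnected := fun u v => (key u).symm.trans (key v), nonempty := ⟨w⟩ }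
end

section
/- Every star graph S_n (one center adjacent to n ≥ 2 leaves) is an NCI graph. -/
/-- The star graph: vertex 0 is the center, adjacent to the n leaves. -/
def starGraph (n : ℕ) : SimpleGraph (Fin (n + 1)) where
  Adj a b := a ≠ b ∧ (a = 0 ∨ b = 0)
  symm := ⟨fun a b h => ⟨h.1.symm, h.2.symm⟩⟩
  loopless := ⟨fun a h => h.1 rfl⟩

/-- Every star graph with at least 2 leaves is an NCI graph. -/
theorem starGraph_isNCI (n : ℕ) (hn : 2 ≤ n) : (starGraph n).IsNCI := by
  constructor
  · intro h
    have key := h 0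
    set u1 : Fin (n+1) := ⟨1, by omega⟩
    set u2 : Fin (n+1) := ⟨2, by omega⟩
    have hm1 : u1 ∈ (starGraph n).neighborSet 0 := by
      refine ⟨fun he => ?_, Or.inl rfl⟩
      have := congrArg Fin.val he
      simp [u1] at this
    have hm2 : u2 ∈ (starGraph n).neighborSet 0 := by
      refine ⟨fun he => ?_, Or.inl rfl⟩
      have := congrArg Fin.val he
      simp [u2] at this
    have heq := key hm1 hm2
    have := congrArg Fin.val heq
    simp [u1, u2] at this
  · intro v w a ha _ _
    exfalso
    obtain ⟨hadj, hvw, hva⟩ := ha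
    rcases hadj.2 with hz | hz
    · exact hvw ⟨fun he => w.2 (hz ▸ he.symm), Or.inr hz⟩
    · exact hva ⟨fun he => a.2 (hz ▸ he.symm), Or.inr hz⟩
end

section
/- Let G be a connected graph with at least 5 vertices. If there exist vertices v_1,...,v_5 of G such that v_1 is a leaf in the induced subgraph H = G[v_1,...,v_5] and P_5 is a spanning tree of H with v_1 an endpoint whose neighbor has degree 2 in the spanning tree, then G is not NCI. -/
/-- The tree `T` on 5 vertices: the path 0 — 1 — 2 together with the
two extra leaves 3 and 4 attached to the vertex 2. -/
def treeT : SimpleGraph (Fin 5) :=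
  SimpleGraph.fromRel (fun a b =>
    (a = 0 ∧ b = 1) ∨ (a = 1 ∧ b = 2) ∨ (a = 2 ∧ b = 3) ∨ (a = 2 ∧ b = 4))

/-- If a connected graph G on at least 5 vertices has vertices v₁,…,v₅ such that
v₁ is a leaf in the induced subgraph H = G[v₁,…,v₅] and P₅ is a spanning tree of
H with v₁ an endpoint whose neighbor has degree 2 in the spanning tree, then G
is not NCI. -/
theorem not_nci_of_p5_spanning_tree {V : Type*} [Fintype V]
    (G : SimpleGraph V) (hconn : G.Connected) (hcard : 5 ≤ Fintype.card V)
    (v₁ v₂ v₃ v₄ v₅ : V)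
    (hdist : List.Nodup [v₁, v₂, v₃, v₄, v₅])
    (hleaf : ((G.induce ({v₁, v₂, v₃, v₄, v₅} : Set V)).neighborSet
      ⟨v₁, by simp⟩).ncard = 1)
    (hspan : ∃ T' : SimpleGraph ({v₁, v₂, v₃, v₄, v₅} : Set V),
      T' ≤ G.induce ({v₁, v₂, v₃, v₄, v₅} : Set V) ∧
      Nonempty (T' ≃g SimpleGraph.pathGraph 5) ∧
      ∀ u, T'.Adj ⟨v₁, by simp⟩ u → (T'.neighborSet u).ncard = 2) :
    ¬ G.IsNCI := by
  obtain ⟨T', hle, ⟨e⟩, -⟩ := hspan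
  rintro ⟨-, hinv⟩
  obtain ⟨w, hw⟩ := Set.ncard_eq_one.mp hleaf
  have hP : ∀ x y : Fin 5, x.val + 1 = y.val ∨ y.val + 1 = x.val →
      (SimpleGraph.pathGraph 5).Adj x y := fun x y h => SimpleGraph.pathGraph_adj.mpr h
  -- any two pathGraph-neighbors of e ⟨v₁,_⟩ coincide
  have hadj : ∀ x y : Fin 5, (SimpleGraph.pathGraph 5).Adj (e ⟨v₁, by simp⟩) x →
      (SimpleGraph.pathGraph 5).Adj (e ⟨v₁, by simp⟩) y → x = y := by
    intro x y hx hy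
    have tx : T'.Adj ⟨v₁, by simp⟩ (e.symm x) := e.map_adj_iff.mp (by simpa using hx)
    have ty : T'.Adj ⟨v₁, by simp⟩ (e.symm y) := e.map_adj_iff.mp (by simpa using hy)
    have mx : e.symm x ∈ ({w} : Set _) := hw.subset (hle tx)
    have my : e.symm y ∈ ({w} : Set _) := hw.subset (hle ty)
    exact e.symm.injective ((Set.mem_singleton_iff.mp mx).trans
      (Set.mem_singleton_iff.mp my).symm)
  have main : ∀ j1 j2 j3 j4 : Fin 5,
      (SimpleGraph.pathGraph 5).Adj (e ⟨v₁, by simp⟩) j1 →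
      (SimpleGraph.pathGraph 5).Adj j2 j3 →
      (SimpleGraph.pathGraph 5).Adj j3 j4 →
      j1 ≠ j2 → j1 ≠ j3 → j1 ≠ j4 → j2 ≠ j4 →
      e ⟨v₁, by simp⟩ ≠ j2 → e ⟨v₁, by simp⟩ ≠ j3 → e ⟨v₁, by simp⟩ ≠ j4 → False := by
    intro j1 j2 j3 j4 h1 h23 h34 h12 h13 h14 h24 hi2 hi3 hi4
    have t1 : T'.Adj ⟨v₁, by simp⟩ (e.symm j1) := e.map_adj_iff.mp (by simpa using h1)
    have t23 : T'.Adj (e.symm j2) (e.symm j3) := e.map_adj_iff.mp (by simpa using h23)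
    have t34 : T'.Adj (e.symm j3) (e.symm j4) := e.map_adj_iff.mp (by simpa using h34)
    have hnadj : ∀ j : Fin 5, j ≠ j1 → ¬ G.Adj v₁ (e.symm j).1 := by
      intro j hj hadjG
      have hm : e.symm j ∈ ({w} : Set _) := hw.subset hadjG
      have hm1 : e.symm j1 ∈ ({w} : Set _) := hw.subset (hle t1)
      exact hj (e.symm.injective ((Set.mem_singleton_iff.mp hm).trans
        (Set.mem_singleton_iff.mp hm1).symm))
    have hne : ∀ j : Fin 5, e ⟨v₁, by simp⟩ ≠ j → (e.symm j).1 ≠ v₁ := by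
      intro j hj h
      apply hj
      have h2 : e.symm j = (⟨v₁, by simp⟩ : ({v₁, v₂, v₃, v₄, v₅} : Set V)) := Subtype.ext h
      have h3 := congrArg e h2
      simpa using h3.symm
    have m2 : (⟨(e.symm j2).1, hne j2 hi2⟩ : {u : V // u ≠ v₁}) ∈
        (G.inversion v₁).neighborSet ⟨(e.symm j3).1, hne j3 hi3⟩ :=
      ⟨(hle t23).symm, hnadj j3 h13.symm, hnadj j2 h12.symm⟩
    have m4 : (⟨(e.symm j4).1, hne j4 hi4⟩ : {u : V // u ≠ v₁}) ∈
        (G.inversion v₁).neighborSet ⟨(e.symm j3).1, hne j3 hi3⟩ :=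
      ⟨hle t34, hnadj j3 h13.symm, hnadj j4 h14.symm⟩
    have heq := hinv v₁ ⟨(e.symm j3).1, hne j3 hi3⟩ m2 m4
    have hval : (e.symm j2).1 = (e.symm j4).1 := congrArg (Subtype.val : {u : V // u ≠ v₁} → V) heq
    exact h24 (e.symm.injective (Subtype.ext hval))
  have h5 : ∀ j : Fin 5, j = 0 ∨ j = 1 ∨ j = 2 ∨ j = 3 ∨ j = 4 := by decide
  rcases h5 (e ⟨v₁, by simp⟩) with h | h | h | h | h
  · exact main 1 2 3 4 (by rw [h]; exact hP _ _ (by decide)) (hP _ _ (by decide))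
      (hP _ _ (by decide)) (by decide) (by decide) (by decide) (by decide)
      (by rw [h]; decide) (by rw [h]; decide) (by rw [h]; decide)
  · exact absurd (hadj 0 2 (by rw [h]; exact hP _ _ (by decide))
      (by rw [h]; exact hP _ _ (by decide))) (by decide)
  · exact absurd (hadj 1 3 (by rw [h]; exact hP _ _ (by decide))
      (by rw [h]; exact hP _ _ (by decide))) (by decide)
  · exact absurd (hadj 2 4 (by rw [h]; exact hP _ _ (by decide))
      (by rw [h]; exact hP _ _ (by decide))) (by decide)
  · exact main 3 2 1 0 (by rw [h]; exact hP _ _ (by decide)) (hP _ _ (by decide))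
      (hP _ _ (by decide)) (by decide) (by decide) (by decide) (by decide)
      (by rw [h]; decide) (by rw [h]; decide) (by rw [h]; decide)
end

section
/- Let G be a connected graph with at least 5 vertices. If there exist vertices v_1,...,v_5 such that v_1 is a leaf in H = G[v_1,...,v_5] and the tree T (a path of length 2 from v_1 ending at a vertex with two additional pendant leaves, i.e., the 'chair/spider' tree with degree sequence 1,2,3,1,1) is a spanning tree of H in which the unique neighbor of v_1 has degree 2, then G is not NCI. -/
instance : DecidableRel treeT.Adj := fun a b =>
  decidable_of_iff _ (SimpleGraph.fromRel_adj _ a b).symm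

lemma treeT_ncard (x : Fin 5) : (treeT.neighborSet x).ncard = (treeT.neighborFinset x).card := by
  rw [Set.ncard_eq_toFinset_card', SimpleGraph.neighborFinset_def]

/-- If a connected graph G on at least 5 vertices has vertices v₁,…,v₅ such that
v₁ is a leaf in the induced subgraph H = G[v₁,…,v₅] and the tree T is a spanning
tree of H in which the unique neighbor of v₁ has degree 2, then G is not NCI. -/
theorem not_nci_of_treeT_spanning_tree {V : Type*} [Fintype V]
    (G : SimpleGraph V) (hconn : G.Connected) (hcard : 5 ≤ Fintype.card V)
    (v₁ v₂ v₃ v₄ v₅ : V)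
    (hdist : List.Nodup [v₁, v₂, v₃, v₄, v₅])
    (hleaf : ((G.induce ({v₁, v₂, v₃, v₄, v₅} : Set V)).neighborSet
      ⟨v₁, by simp⟩).ncard = 1)
    (hspan : ∃ T' : SimpleGraph ({v₁, v₂, v₃, v₄, v₅} : Set V),
      T' ≤ G.induce ({v₁, v₂, v₃, v₄, v₅} : Set V) ∧
      Nonempty (T' ≃g treeT) ∧
      ∀ u, T'.Adj ⟨v₁, by simp⟩ u → (T'.neighborSet u).ncard = 2) :
    ¬ G.IsNCI := by
  classical
  set S : Set V := {v₁, v₂, v₃, v₄, v₅} with hS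
  obtain ⟨T', hle, ⟨φ⟩, hdeg2⟩ := hspan
  set w1 : S := ⟨v₁, by simp [hS]⟩ with hw1
  have hleaf' : ((G.induce S).neighborSet w1).ncard = 1 := hleaf
  have hdeg2' : ∀ u, T'.Adj w1 u → (T'.neighborSet u).ncard = 2 := hdeg2
  -- iso transfers neighbor set cardinalities
  have hiso : ∀ u : S, (T'.neighborSet u).ncard = (treeT.neighborSet (φ u)).ncard := by
    intro u
    rw [← Nat.card_coe_set_eq, ← Nat.card_coe_set_eq]
    exact Nat.card_congr (φ.mapNeighborSet u)
  -- v₁ has at most one neighbor in T'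
  have hW1le : (T'.neighborSet w1).ncard ≤ 1 := by
    rw [← hleaf']
    exact Set.ncard_le_ncard (fun x hx => hle hx) (Set.toFinite _)
  -- the T'-neighbor b of w1
  obtain ⟨y, hy⟩ := (by decide : ∀ x : Fin 5, ∃ y, treeT.Adj x y) (φ w1)
  set b : S := φ.symm y with hb
  have hadj_w1b : T'.Adj w1 b := by
    rw [← φ.map_rel_iff]
    simpa [hb] using hy
  have hb1 : φ b = 1 := by
    have h2 : (treeT.neighborFinset (φ b)).card = 2 := by
      rw [← treeT_ncard, ← hiso b]; exact hdeg2' b hadj_w1b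
    exact (by decide : ∀ x : Fin 5, (treeT.neighborFinset x).card = 2 → x = 1) _ h2
  have hw0 : φ w1 = 0 := by
    have hd1 : (treeT.neighborFinset (φ w1)).card ≤ 1 := by
      rw [← treeT_ncard, ← hiso w1]; exact hW1le
    have hadj : treeT.Adj (φ w1) 1 := by
      rw [← hb1]; exact φ.map_rel_iff.mpr hadj_w1b
    exact (by decide : ∀ x : Fin 5, treeT.Adj x 1 → (treeT.neighborFinset x).card ≤ 1 → x = 0)
      _ hadj hd1
  -- the vertices c, d, e
  set c : S := φ.symm 2 with hc
  set d : S := φ.symm 3 with hd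
  set e : S := φ.symm 4 with he
  have hcd : T'.Adj c d := by
    rw [← φ.map_rel_iff]
    simpa [hc, hd] using (by decide : treeT.Adj 2 3)
  have hce : T'.Adj c e := by
    rw [← φ.map_rel_iff]
    simpa [hc, he] using (by decide : treeT.Adj 2 4)
  -- the unique H-neighbor of v₁ is b
  obtain ⟨a0, ha0⟩ := Set.ncard_eq_one.mp hleaf'
  have hb_eq : b = a0 := by
    have hmem : b ∈ (G.induce S).neighborSet w1 := hle hadj_w1b
    rwa [ha0, Set.mem_singleton_iff] at hmem
  -- vertices not mapped to 1 are not G-adjacent to v₁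
  have hnon : ∀ x : S, φ x ≠ 1 → ¬ G.Adj v₁ x.1 := by
    intro x hx hadj
    have hmem : x ∈ (G.induce S).neighborSet w1 := by
      show (G.induce S).Adj w1 x
      exact hadj
    rw [ha0, Set.mem_singleton_iff] at hmem
    exact hx (by rw [hmem, ← hb_eq, hb1])
  -- vertices not mapped to 0 are not v₁
  have hne : ∀ x : S, φ x ≠ 0 → x.1 ≠ v₁ := by
    intro x hx h
    have hxw : x = w1 := Subtype.ext h
    exact hx (by rw [hxw, hw0])
  have hcphi : φ c = 2 := φ.apply_symm_apply 2
  have hdphi : φ d = 3 := φ.apply_symm_apply 3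
  have hephi : φ e = 4 := φ.apply_symm_apply 4
  have hcne : c.1 ≠ v₁ := hne c (by rw [hcphi]; decide)
  have hdne : d.1 ≠ v₁ := hne d (by rw [hdphi]; decide)
  have hene : e.1 ≠ v₁ := hne e (by rw [hephi]; decide)
  have hcnon : ¬ G.Adj v₁ c.1 := hnon c (by rw [hcphi]; decide)
  have hdnon : ¬ G.Adj v₁ d.1 := hnon d (by rw [hdphi]; decide)
  have henon : ¬ G.Adj v₁ e.1 := hnon e (by rw [hephi]; decide)
  have hGcd : G.Adj c.1 d.1 := hle hcd
  have hGce : G.Adj c.1 e.1 := hle hce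
  rintro ⟨-, hinv⟩
  have md : (⟨d.1, hdne⟩ : {u : V // u ≠ v₁}) ∈
      (G.inversion v₁).neighborSet ⟨c.1, hcne⟩ := ⟨hGcd, hcnon, hdnon⟩
  have me : (⟨e.1, hene⟩ : {u : V // u ≠ v₁}) ∈
      (G.inversion v₁).neighborSet ⟨c.1, hcne⟩ := ⟨hGce, hcnon, henon⟩
  have h' := hinv v₁ ⟨c.1, hcne⟩ md me
  have hde1 : d.1 = e.1 := by injection h'
  have hde : d = e := Subtype.ext hde1
  have : (3 : Fin 5) = 4 := by rw [← hdphi, ← hephi, hde]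
  exact absurd this (by decide)
end
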